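/- Let r : [0,1] → ℝ be a nonnegative differentiable function satisfying r(p)·r′(1−p) = p − 1 for every p ∈ [0,1]. Then there exists a constant c ≥ 0 such that r(p)·r(1−p) = p − p² + c for all p ∈ [0,1]; moreover c = r(0)·r(1). -/

import Mathlib

/-- Product identity: if `r` is nonnegative and differentiable on `[0,1]` with
`r p · r' (1-p) = p - 1`, then there is `c ≥ 0`, namely `c = r 0 · r 1`, with
`r p · r (1-p) = p - p² + c` on `[0,1]`. -/
theorem product_identity (r r' : ℝ → ℝ)
    (hderiv : ∀ p ∈ Set.Icc (0:ℝ) 1, HasDerivWithinAt r (r' p) (Set.Icc 0 1) p)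
    (hnonneg : ∀ p ∈ Set.Icc (0:ℝ) 1, 0 ≤ r p)
    (heq : ∀ p ∈ Set.Icc (0:ℝ) 1, r p * r' (1 - p) = p - 1) :
    ∃ c : ℝ, 0 ≤ c ∧ (∀ p ∈ Set.Icc (0:ℝ) 1, r p * r (1 - p) = p - p ^ 2 + c) ∧
      c = r 0 * r 1 := by
  have hmaps : Set.MapsTo (fun p : ℝ => 1 - p) (Set.Icc 0 1) (Set.Icc 0 1) := by
    intro x hx
    simp only [Set.mem_Icc] at hx ⊢
    constructor <;> linarith [hx.1, hx.2]
  set h : ℝ → ℝ := fun p => r p * r (1 - p) - (p - p ^ 2) with hh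
  have hd : ∀ p ∈ Set.Icc (0:ℝ) 1, HasDerivWithinAt h 0 (Set.Icc 0 1) p := by
    intro p hp
    have h1p : (1 : ℝ) - p ∈ Set.Icc (0:ℝ) 1 := hmaps hp
    have hc : HasDerivWithinAt (fun q : ℝ => r (1 - q)) (r' (1 - p) * (-1))
        (Set.Icc 0 1) p := by
      exact (hderiv _ h1p).comp p (((hasDerivWithinAt_id p _).const_sub 1)) hmaps
    have hg : HasDerivWithinAt (fun q => r q * r (1 - q))
        (r' p * r (1 - p) + r p * (r' (1 - p) * (-1))) (Set.Icc 0 1) p :=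
      (hderiv p hp).mul hc
    have hpoly : HasDerivWithinAt (fun q : ℝ => q - q ^ 2) (1 - 2 * p) (Set.Icc 0 1) p := by
      have := ((hasDerivWithinAt_id p (Set.Icc (0:ℝ) 1)).sub
        ((hasDerivWithinAt_id p (Set.Icc (0:ℝ) 1)).pow 2))
      simp at this
      exact this
    have key : r' p * r (1 - p) + r p * (r' (1 - p) * (-1)) = 1 - 2 * p := by
      have e1 := heq p hp
      have e2 := heq (1 - p) h1p
      simp only [sub_sub_cancel] at e2
      nlinarith [e1, e2]
    have := hg.sub hpoly
    rw [key, sub_self] at this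
    exact this
  have hconst : ∀ p ∈ Set.Icc (0:ℝ) 1, h p = h 0 := by
    apply constant_of_has_deriv_right_zero
    · exact fun p hp => (hd p hp).continuousWithinAt
    · intro x hx
      exact (hd x (Set.mem_Icc_of_Ico hx)).mono_of_mem_nhdsWithin
        (Icc_mem_nhdsGE_of_mem hx)
  refine ⟨r 0 * r 1, mul_nonneg (hnonneg 0 (by norm_num)) (hnonneg 1 (by norm_num)), ?_, rfl⟩
  intro p hp
  have := hconst p hp
  simp only [hh, sub_zero] at this
  norm_num at this
  linarith [this]
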